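/- Semi-discrete Scharfetter-Gummel energy dissipation, generalized Keller-Segel case: let K ∈ ℝ^{I×I} be symmetric, suppose u_1,...,u_I : J → ℝ are differentiable on the open interval J, set v_i(t) = Σ_{j=1}^I K_{ij} u_j(t), and suppose u solves u_i'(t) + (1/Δx)(F_{i+1/2}(t) − F_{i−1/2}(t)) = 0 for i = 1,...,I, where F_{1/2} = F_{I+1/2} = 0 and, for 1 ≤ i ≤ I−1, F_{i+1/2}(t) = −(c_{i+1/2}(t)/Δx)[ exp(g(u_{i+1}(t)) − v_{i+1}(t)) − exp(g(u_i(t)) − v_i(t)) ] with nonnegative functions c_{i+1/2}. Then, writing x_i(t) = g(u_i(t)) − v_i(t), for every t ∈ J, (d/dt)[ Δx Σ_{i=1}^I ( G(u_i(t)) − (1/2) u_i(t) v_i(t) ) ] = −(1/Δx) Σ_{i=1}^{I−1} c_{i+1/2}(t) ( exp(x_{i+1}(t)) − exp(x_i(t)) ) ( x_{i+1}(t) − x_i(t) ), which is ≤ 0. -/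

import Mathlib

/-- Abel summation identity used below. -/
lemma abel_sum_aux (N : ℕ) (x f : ℕ → ℝ) :
    ∑ i ∈ Finset.Icc 1 (N+1), x i * (f i - f (i-1)) =
      x (N+1) * f (N+1) - x 1 * f 0 - ∑ i ∈ Finset.Icc 1 N, (x (i+1) - x i) * f i := by
  induction N with
  | zero => simp; ring
  | succ n ih =>
    rw [Finset.sum_Icc_succ_top (by omega : 1 ≤ n + 1 + 1), ih,
      Finset.sum_Icc_succ_top (by omega : 1 ≤ n + 1)]
    simp only [Nat.add_sub_cancel]
    ring

/-- semi-discrete Scharfetter-Gummel energy dissipation,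
generalized Keller-Segel case. -/
theorem semidiscrete_scharfetter_gummel_energy_dissipation_GKS
    (I : ℕ) (hI : 1 ≤ I) (Δx : ℝ) (hΔx : Δx = 1 / (I : ℝ))
    (J : Set ℝ) (hJopen : IsOpen J) (hJconn : J.OrdConnected)
    (g G : ℝ → ℝ) (hG : ∀ x : ℝ, HasDerivAt G (g x) x)
    (K : ℕ → ℕ → ℝ) (hK : ∀ i j, K i j = K j i)
    (u : ℕ → ℝ → ℝ) (c : ℕ → ℝ → ℝ)
    (v : ℕ → ℝ → ℝ)
    (hv : ∀ i, ∀ t : ℝ, v i t = ∑ j ∈ Finset.Icc 1 I, K i j * u j t)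
    (hc : ∀ i, ∀ t ∈ J, 0 ≤ c i t)
    (F : ℕ → ℝ → ℝ)
    (hF0 : ∀ t, F 0 t = 0) (hFI : ∀ t, F I t = 0)
    (hF : ∀ i ∈ Finset.Icc 1 (I - 1), ∀ t ∈ J,
      F i t = -(c i t / Δx) *
        (Real.exp (g (u (i + 1) t) - v (i + 1) t) - Real.exp (g (u i t) - v i t)))
    (hode : ∀ i ∈ Finset.Icc 1 I, ∀ t ∈ J,
      HasDerivAt (u i) (-(1 / Δx) * (F i t - F (i - 1) t)) t) :
    ∀ t ∈ J,
      HasDerivAt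
        (fun s => Δx * ∑ i ∈ Finset.Icc 1 I, (G (u i s) - (1 / 2) * u i s * v i s))
        (-(1 / Δx) * ∑ i ∈ Finset.Icc 1 (I - 1),
          c i t * (Real.exp (g (u (i + 1) t) - v (i + 1) t) - Real.exp (g (u i t) - v i t))
            * ((g (u (i + 1) t) - v (i + 1) t) - (g (u i t) - v i t))) t
      ∧ -(1 / Δx) * ∑ i ∈ Finset.Icc 1 (I - 1),
          c i t * (Real.exp (g (u (i + 1) t) - v (i + 1) t) - Real.exp (g (u i t) - v i t))
            * ((g (u (i + 1) t) - v (i + 1) t) - (g (u i t) - v i t)) ≤ 0 := by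
  intro t ht
  have hIpos : (0:ℝ) < (I:ℝ) := by exact_mod_cast hI
  have hΔ : 0 < Δx := by rw [hΔx]; positivity
  have hΔne : Δx ≠ 0 := ne_of_gt hΔ
  set S := Finset.Icc 1 I with hS
  set d : ℕ → ℝ := fun i => -(1/Δx) * (F i t - F (i-1) t) with hd
  have hu : ∀ i ∈ S, HasDerivAt (u i) (d i) t := fun i hi => hode i hi t ht
  have hvder : ∀ i, HasDerivAt (v i) (∑ j ∈ S, K i j * d j) t := by
    intro i
    have hveq : v i = fun s => ∑ j ∈ S, K i j * u j s := funext (hv i)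
    rw [hveq]
    exact HasDerivAt.fun_sum fun j hj => (hu j hj).const_mul _
  -- derivative of the energy
  have hE : HasDerivAt
      (fun s => Δx * ∑ i ∈ S, (G (u i s) - (1/2) * u i s * v i s))
      (Δx * ∑ i ∈ S, (g (u i t) * d i -
        (1/2) * (d i * v i t + u i t * ∑ j ∈ S, K i j * d j))) t := by
    apply HasDerivAt.const_mul
    apply HasDerivAt.fun_sum
    intro i hi
    have h1 : HasDerivAt (fun s => G (u i s)) (g (u i t) * d i) t :=
      (hG (u i t)).comp t (hu i hi)
    have h2 : HasDerivAt (fun s => (1/2 : ℝ) * u i s * v i s)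
        ((1/2) * (d i * v i t + u i t * ∑ j ∈ S, K i j * d j)) t := by
      have heq : (fun s => (1/2 : ℝ) * u i s * v i s)
          = fun s => (1/2 : ℝ) * (u i s * v i s) := by funext s; ring
      rw [heq]
      exact ((hu i hi).mul (hvder i)).const_mul _
    exact h1.sub h2
  -- symmetry of K
  have hsym : ∑ i ∈ S, u i t * ∑ j ∈ S, K i j * d j = ∑ i ∈ S, d i * v i t := by
    simp_rw [Finset.mul_sum]
    rw [Finset.sum_comm]
    refine Finset.sum_congr rfl fun j _ => ?_
    rw [hv j t, Finset.mul_sum]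
    refine Finset.sum_congr rfl fun i _ => ?_
    rw [hK i j]; ring
  -- reduce the derivative value
  have key1 : ∑ i ∈ S, (g (u i t) * d i -
      (1/2) * (d i * v i t + u i t * ∑ j ∈ S, K i j * d j))
      = ∑ i ∈ S, (g (u i t) - v i t) * d i := by
    have hterm : ∀ i ∈ S, (g (u i t) * d i -
        (1/2) * (d i * v i t + u i t * ∑ j ∈ S, K i j * d j))
        = (g (u i t) - v i t) * d i
          + (1/2) * (d i * v i t - u i t * ∑ j ∈ S, K i j * d j) := fun i _ => by ring
    rw [Finset.sum_congr rfl hterm, Finset.sum_add_distrib, ← Finset.mul_sum,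
      Finset.sum_sub_distrib, ← hsym, sub_self, mul_zero, add_zero]
  -- Abel summation
  have hI1 : I - 1 + 1 = I := by omega
  have habel : ∑ i ∈ S, (g (u i t) - v i t) * (F i t - F (i-1) t)
      = - ∑ i ∈ Finset.Icc 1 (I-1),
          ((g (u (i+1) t) - v (i+1) t) - (g (u i t) - v i t)) * F i t := by
    have := abel_sum_aux (I-1) (fun i => g (u i t) - v i t) (fun i => F i t)
    rw [hI1] at this
    rw [hS, this, hF0, hFI]
    ring
  have key2 : Δx * ∑ i ∈ S, (g (u i t) - v i t) * d i
      = -(1/Δx) * ∑ i ∈ Finset.Icc 1 (I - 1),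
          c i t * (Real.exp (g (u (i + 1) t) - v (i + 1) t) - Real.exp (g (u i t) - v i t))
            * ((g (u (i + 1) t) - v (i + 1) t) - (g (u i t) - v i t)) := by
    have e1 : Δx * ∑ i ∈ S, (g (u i t) - v i t) * d i
        = - ∑ i ∈ S, (g (u i t) - v i t) * (F i t - F (i-1) t) := by
      rw [Finset.mul_sum, ← Finset.sum_neg_distrib]
      refine Finset.sum_congr rfl fun i _ => ?_
      rw [hd]
      field_simp
    rw [e1, habel, neg_neg, Finset.mul_sum]
    refine Finset.sum_congr rfl fun i hi => ?_
    rw [hF i hi t ht]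
    ring
  constructor
  · rw [key1, key2] at hE
    exact hE
  · have hsum : 0 ≤ ∑ i ∈ Finset.Icc 1 (I - 1),
        c i t * (Real.exp (g (u (i + 1) t) - v (i + 1) t) - Real.exp (g (u i t) - v i t))
          * ((g (u (i + 1) t) - v (i + 1) t) - (g (u i t) - v i t)) := by
      refine Finset.sum_nonneg fun i _ => ?_
      rw [mul_assoc]
      refine mul_nonneg (hc i t ht) ?_
      rcases le_total (g (u i t) - v i t) (g (u (i+1) t) - v (i+1) t) with h | h
      · exact mul_nonneg (sub_nonneg.2 (Real.exp_le_exp.2 h)) (sub_nonneg.2 h)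
      · have h1 := mul_nonneg
          (neg_nonneg.2 (sub_nonpos.2 (Real.exp_le_exp.2 h)))
          (neg_nonneg.2 (sub_nonpos.2 h))
        nlinarith [h1]
    have : 0 ≤ (1/Δx) := by positivity
    nlinarith
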